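/- Assume P is the identity matrix and X_{i,j} = 0 whenever dist(i,j) > R, and let i, j ∈ L and t ∈ ℝ satisfy e·τ < 2·d_{i,j}. Then, with B = (eτ/(2d_{i,j}))^{2d_{i,j}} / (√(d_{i,j}) · (1 − (eτ/(2d_{i,j}))²)), one has √‖X‖·|C^{xx}_{i,j}(t)| ≤ B, |C^{xp}_{i,j}(t)| ≤ B, and |C^{px}_{i,j}(t)| ≤ B. -/

import Mathlib

open scoped Matrix

/-- The ℓ²→ℓ² operator norm of a real matrix. -/
noncomputable def l2OpNorm {V : Type*} [Fintype V] [DecidableEq V] (M : Matrix V V ℝ) : ℝ :=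
  ‖Matrix.toEuclideanCLM (𝕜 := ℝ) M‖

/-- For `P = 𝟙`: `C^{xx}_{i,j}(t) = ∑_{n≥0} (−1)^n t^{2n+1} (X^n)_{i,j}/(2n+1)!`. -/
noncomputable def Cxx {V : Type*} [Fintype V] [DecidableEq V]
    (X : Matrix V V ℝ) (i j : V) (t : ℝ) : ℝ :=
  ∑' n : ℕ, (-1 : ℝ) ^ n * t ^ (2 * n + 1) * ((X ^ n) i j) / (Nat.factorial (2 * n + 1))

/-- For `P = 𝟙`: `C^{xp}_{i,j}(t) = −∑_{n≥0} (−1)^n t^{2n} (X^n)_{i,j}/(2n)!`. -/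
noncomputable def Cxp {V : Type*} [Fintype V] [DecidableEq V]
    (X : Matrix V V ℝ) (i j : V) (t : ℝ) : ℝ :=
  -∑' n : ℕ, (-1 : ℝ) ^ n * t ^ (2 * n) * ((X ^ n) i j) / (Nat.factorial (2 * n))

/-- For `P = 𝟙`: `C^{px}_{i,j}(t) = ∑_{n≥0} (−1)^n t^{2n} (X^n)_{i,j}/(2n)!`. -/
noncomputable def Cpx {V : Type*} [Fintype V] [DecidableEq V]
    (X : Matrix V V ℝ) (i j : V) (t : ℝ) : ℝ :=
  ∑' n : ℕ, (-1 : ℝ) ^ n * t ^ (2 * n) * ((X ^ n) i j) / (Nat.factorial (2 * n))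

lemma euclid_apply_le {V : Type*} [Fintype V] [DecidableEq V]
    (x : EuclideanSpace ℝ V) (i : V) : |x i| ≤ ‖x‖ := by
  have := abs_real_inner_le_norm (EuclideanSpace.single i (1:ℝ)) x
  simpa [EuclideanSpace.inner_single_left] using this

lemma abs_entry_le_l2OpNorm {V : Type*} [Fintype V] [DecidableEq V]
    (M : Matrix V V ℝ) (i j : V) : |M i j| ≤ l2OpNorm M := by
  classical
  have h1 : Matrix.toEuclideanCLM (𝕜 := ℝ) M (EuclideanSpace.single j (1:ℝ))
      = (WithLp.equiv 2 _).symm (M *ᵥ Pi.single j 1) := by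
    rw [← EuclideanSpace.toLp_single]
    exact Matrix.toEuclideanCLM_toLp M (Pi.single j 1)
  have h2 : ‖Matrix.toEuclideanCLM (𝕜 := ℝ) M (EuclideanSpace.single j (1:ℝ))‖ ≤ l2OpNorm M := by
    calc ‖Matrix.toEuclideanCLM (𝕜 := ℝ) M (EuclideanSpace.single j (1:ℝ))‖
        ≤ l2OpNorm M * ‖EuclideanSpace.single j (1:ℝ)‖ :=
          (Matrix.toEuclideanCLM (𝕜 := ℝ) M).le_opNorm _
      _ = l2OpNorm M := by rw [EuclideanSpace.norm_single]; simp
  refine le_trans ?_ h2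
  have h3 : (Matrix.toEuclideanCLM (𝕜 := ℝ) M (EuclideanSpace.single j (1:ℝ))) i = M i j := by
    rw [h1]
    show (M *ᵥ Pi.single j 1) i = M i j
    simp [Matrix.mulVec_single]
  rw [← h3]
  exact euclid_apply_le _ i

lemma abs_pow_entry_le {V : Type*} [Fintype V] [DecidableEq V]
    (M : Matrix V V ℝ) (n : ℕ) (i j : V) : |(M ^ n) i j| ≤ l2OpNorm M ^ n := by
  refine (abs_entry_le_l2OpNorm _ i j).trans ?_
  have hN : Nonempty V := ⟨i⟩
  unfold l2OpNorm
  rw [map_pow]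
  rcases Nat.eq_zero_or_pos n with rfl | hn
  · simp
  · exact norm_pow_le' _ hn

lemma pow_entry_eq_zero {V : Type*} [Fintype V] [DecidableEq V]
    (G : SimpleGraph V) (hconn : G.Connected) (R : ℕ)
    (X : Matrix V V ℝ) (hXloc : ∀ i j : V, R < G.dist i j → X i j = 0) :
    ∀ (n : ℕ) (i j : V), n * R < G.dist i j → (X ^ n) i j = 0 := by
  intro n
  induction n with
  | zero =>
    intro i j h
    simp only [zero_mul] at h
    have hij : i ≠ j := by rintro rfl; rw [SimpleGraph.dist_self] at h; exact lt_irrefl 0 h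
    simp [Matrix.one_apply_ne hij]
  | succ n ih =>
    intro i j h
    rw [pow_succ, Matrix.mul_apply]
    refine Finset.sum_eq_zero fun k _ => ?_
    by_cases hk : n * R < G.dist i k
    · rw [ih i k hk, zero_mul]
    · push_neg at hk
      have htri : G.dist i j ≤ G.dist i k + G.dist k j := hconn.dist_triangle
      have hsucc : (n + 1) * R = n * R + R := by ring
      have : R < G.dist k j := by omega
      rw [hXloc k j this, mul_zero]

lemma stirling_lb (n : ℕ) (hn : 1 ≤ n) :
    Real.sqrt n * (n / Real.exp 1) ^ n ≤ (Nat.factorial n : ℝ) := by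
  have hs : Real.sqrt Real.pi ≤ Stirling.stirlingSeq n := by
    obtain ⟨m, rfl⟩ := Nat.exists_eq_add_of_le hn
    have := Stirling.stirlingSeq'_antitone.le_of_tendsto
      (Stirling.tendsto_stirlingSeq_sqrt_pi.comp (Filter.tendsto_add_atTop_nat 1)) m
    simpa [Function.comp, Nat.succ_eq_add_one, Nat.add_comm] using this
  have hn' : (0:ℝ) < n := by exact_mod_cast hn
  have hden : 0 < Real.sqrt (2 * n) * ((n:ℝ) / Real.exp 1) ^ n := by
    apply mul_pos (Real.sqrt_pos.mpr (by linarith)) (pow_pos (by positivity) n)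
  have h1 : Real.sqrt Real.pi * (Real.sqrt (2 * n) * ((n:ℝ) / Real.exp 1) ^ n)
      ≤ (Nat.factorial n : ℝ) := by
    rw [Stirling.stirlingSeq] at hs
    exact (le_div_iff₀ hden).mp hs
  refine le_trans ?_ h1
  have hpi : (1:ℝ) ≤ Real.sqrt Real.pi := by
    rw [show (1:ℝ) = Real.sqrt 1 by simp]
    exact Real.sqrt_le_sqrt (by linarith [Real.pi_gt_three])
  have h2 : Real.sqrt (n:ℝ) ≤ Real.sqrt (2 * n) := Real.sqrt_le_sqrt (by linarith)
  calc Real.sqrt (n:ℝ) * ((n:ℝ) / Real.exp 1) ^ n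
      ≤ Real.sqrt (2 * n) * ((n:ℝ) / Real.exp 1) ^ n := by
        apply mul_le_mul_of_nonneg_right h2 (by positivity)
    _ ≤ Real.sqrt Real.pi * (Real.sqrt (2 * n) * ((n:ℝ) / Real.exp 1) ^ n) := by
        nth_rewrite 1 [← one_mul (Real.sqrt (2 * n) * _)]
        exact mul_le_mul_of_nonneg_right hpi (le_of_lt hden)

lemma tsum_tail_bound (f : ℕ → ℝ) (m : ℕ) (q sd : ℝ) (hq0 : 0 ≤ q) (hq1 : q < 1)
    (hsd : 0 < sd) (hf : Summable f) (h0 : ∀ n, n < m → f n = 0)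
    (hb : ∀ n, m ≤ n → |f n| ≤ q ^ n / sd) :
    |∑' n, f n| ≤ q ^ m / (sd * (1 - q)) := by
  have hshift : ∑' n, f n = ∑' n, f (n + m) := by
    rw [← Summable.sum_add_tsum_nat_add m hf,
      Finset.sum_eq_zero (fun k hk => h0 k (Finset.mem_range.mp hk)), zero_add]
  have hg : Summable (fun n : ℕ => q ^ (n + m) / sd) := by
    have := (summable_geometric_of_lt_one hq0 hq1).mul_right (q ^ m / sd)
    refine this.congr fun n => ?_
    rw [pow_add]; ring
  have habssum : Summable (fun n : ℕ => |f (n + m)|) :=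
    hg.of_nonneg_of_le (fun n => abs_nonneg _) (fun n => hb (n + m) (Nat.le_add_left m n))
  have habs' : Summable (fun n : ℕ => ‖f (n + m)‖) := by
    simpa only [Real.norm_eq_abs] using habssum
  have h1 : |∑' n, f (n + m)| ≤ ∑' n, |f (n + m)| := by
    have := norm_tsum_le_tsum_norm habs'
    simpa only [Real.norm_eq_abs] using this
  have h2 : ∑' n : ℕ, |f (n + m)| ≤ ∑' n : ℕ, q ^ (n + m) / sd :=
    Summable.tsum_le_tsum (fun n => hb (n + m) (Nat.le_add_left m n)) habssum hg
  have h3 : ∑' n : ℕ, q ^ (n + m) / sd = q ^ m / (sd * (1 - q)) := by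
    have he : (fun n : ℕ => q ^ (n + m) / sd) = fun n : ℕ => (q ^ m / sd) * q ^ n := by
      funext n; rw [pow_add]; ring
    rw [he, tsum_mul_left, tsum_geometric_of_lt_one hq0 hq1, ← div_div,
      div_eq_mul_inv (q ^ m / sd)]
  rw [hshift]
  calc |∑' n, f (n + m)| ≤ _ := h1
    _ ≤ _ := h2
    _ = _ := h3

set_option maxHeartbeats 1000000 in
/-- **Causal cone for `P = 𝟙`.** If `e·τ < 2·d_{i,j}` with `d_{i,j} = dist(i,j)/R` and
`τ = √‖X‖·|t|`, then with `B = (eτ/(2d))^{2d} / (√d · (1 − (eτ/(2d))²))` one has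
`√‖X‖·|C^{xx}| ≤ B`, `|C^{xp}| ≤ B` and `|C^{px}| ≤ B`. -/
theorem lieb_robinson_P_one_causal_cone {V : Type*} [Fintype V] [DecidableEq V]
    (G : SimpleGraph V) (hconn : G.Connected) (R : ℕ) (hR : 1 ≤ R)
    (X : Matrix V V ℝ) (hX : X.IsSymm)
    (hXloc : ∀ i j : V, R < G.dist i j → X i j = 0)
    (i j : V) (t : ℝ)
    (hcone : Real.exp 1 * (Real.sqrt (l2OpNorm X) * |t|) < 2 * ((G.dist i j : ℝ) / R)) :
    let τ : ℝ := Real.sqrt (l2OpNorm X) * |t|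
    let d : ℝ := (G.dist i j : ℝ) / R
    let B : ℝ := (Real.exp 1 * τ / (2 * d)) ^ (2 * d) /
      (Real.sqrt d * (1 - (Real.exp 1 * τ / (2 * d)) ^ 2))
    Real.sqrt (l2OpNorm X) * |Cxx X i j t| ≤ B ∧
    |Cxp X i j t| ≤ B ∧ |Cpx X i j t| ≤ B := by
  intro τ d B
  classical
  have hN0 : 0 ≤ l2OpNorm X := norm_nonneg _
  have hs0 : 0 ≤ Real.sqrt (l2OpNorm X) := Real.sqrt_nonneg _
  have hτ0 : 0 ≤ τ := mul_nonneg hs0 (abs_nonneg t)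
  have he1 : (1:ℝ) ≤ Real.exp 1 := Real.one_le_exp (by norm_num)
  have heτ : 0 ≤ Real.exp 1 * τ := mul_nonneg (by positivity) hτ0
  have hcone' : Real.exp 1 * τ < 2 * d := hcone
  have hd : 0 < d := by nlinarith
  have hRpos : (0:ℝ) < R := by exact_mod_cast hR
  set r : ℝ := Real.exp 1 * τ / (2 * d) with hrdef
  have hr0 : 0 ≤ r := div_nonneg heτ (by linarith)
  have hr1 : r < 1 := (div_lt_one (by linarith)).mpr hcone'
  have hq0 : 0 ≤ r ^ 2 := sq_nonneg r
  have hq1 : r ^ 2 < 1 := by nlinarith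
  have hsd : 0 < Real.sqrt d := Real.sqrt_pos.mpr hd
  set m := Nat.ceil d with hmdef
  have hm1 : 1 ≤ m := Nat.one_le_iff_ne_zero.mpr (by
    intro h0
    rw [hmdef] at h0
    have := Nat.ceil_eq_zero.mp h0
    linarith)
  have hdm : d ≤ (m:ℝ) := Nat.le_ceil d
  -- entries of powers vanish below the cone
  have hzero : ∀ n : ℕ, n < m → (X ^ n) i j = 0 := by
    intro n hn
    apply pow_entry_eq_zero G hconn R X hXloc n i j
    have h1 : (n : ℝ) < d := by rwa [hmdef, Nat.lt_ceil] at hn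
    have h1' : (n:ℝ) < (G.dist i j : ℝ) / R := h1
    rw [lt_div_iff₀ hRpos] at h1'
    exact_mod_cast h1'
  -- key per-term estimate
  have hkey : ∀ n : ℕ, m ≤ n →
      τ ^ (2*n) / (Nat.factorial (2*n) : ℝ) ≤ (r ^ 2) ^ n / Real.sqrt d := by
    intro n hn
    have hdn : d ≤ (n:ℝ) := le_trans hdm (by exact_mod_cast hn)
    have h2n : 1 ≤ 2 * n := by omega
    have hst := stirling_lb (2*n) h2n
    have hc0 : (0:ℝ) < ((2*n : ℕ):ℝ) := by exact_mod_cast (by omega : 0 < 2*n)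
    have hPpos : 0 < (((2*n:ℕ):ℝ) / Real.exp 1) ^ (2*n) := pow_pos (by positivity) _
    have hsdle : Real.sqrt d ≤ Real.sqrt ((2*n:ℕ):ℝ) := by
      apply Real.sqrt_le_sqrt
      push_cast
      linarith
    have hfac : Real.sqrt d * (((2*n:ℕ):ℝ) / Real.exp 1) ^ (2*n)
        ≤ (Nat.factorial (2*n):ℝ) :=
      le_trans (mul_le_mul_of_nonneg_right hsdle hPpos.le) hst
    have step1 : τ^(2*n) / (Nat.factorial (2*n):ℝ)
        ≤ τ^(2*n) / (Real.sqrt d * (((2*n:ℕ):ℝ) / Real.exp 1) ^ (2*n)) :=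
      div_le_div_of_nonneg_left (by positivity) (mul_pos hsd hPpos) hfac
    have step2 : τ^(2*n) / (Real.sqrt d * (((2*n:ℕ):ℝ) / Real.exp 1) ^ (2*n))
        = (Real.exp 1 * τ / ((2*n:ℕ):ℝ)) ^ (2*n) / Real.sqrt d := by
      have hc' : ((2*n:ℕ):ℝ) ≠ 0 := hc0.ne'
      have he0 : Real.exp 1 ≠ 0 := (Real.exp_pos 1).ne'
      have hsd0 : Real.sqrt d ≠ 0 := hsd.ne'
      rw [div_pow, div_pow, mul_pow]; field_simp
      show _ = (Real.exp 1 * (Real.sqrt (l2OpNorm X) * |t|)) ^ (2*n)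
      ring
    have step3 : (Real.exp 1 * τ / ((2*n:ℕ):ℝ)) ^ (2*n) ≤ (r^2)^n := by
      have h1 : Real.exp 1 * τ / ((2*n:ℕ):ℝ) ≤ r := by
        rw [hrdef]
        exact div_le_div_of_nonneg_left heτ (by linarith) (by push_cast; linarith)
      rw [← pow_mul]
      exact pow_le_pow_left₀ (div_nonneg heτ hc0.le) h1 (2*n)
    calc τ^(2*n) / (Nat.factorial (2*n):ℝ)
        ≤ τ^(2*n) / (Real.sqrt d * (((2*n:ℕ):ℝ) / Real.exp 1) ^ (2*n)) := step1
      _ = (Real.exp 1 * τ / ((2*n:ℕ):ℝ)) ^ (2*n) / Real.sqrt d := step2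
      _ ≤ (r^2)^n / Real.sqrt d := (div_le_div_iff_of_pos_right hsd).mpr step3
  -- τ-power identities
  have hτpow : ∀ n : ℕ, τ ^ (2*n) = |t|^(2*n) * (l2OpNorm X)^n := by
    intro n
    have h1 : τ ^ (2*n) = (Real.sqrt (l2OpNorm X))^(2*n) * |t|^(2*n) := by
      rw [show τ = Real.sqrt (l2OpNorm X) * |t| from rfl, mul_pow]
    rw [h1, pow_mul, Real.sq_sqrt hN0, mul_comm]
  -- absolute value of the generic even term
  have habs1 : ∀ n : ℕ, |(-1:ℝ)^n * t^(2*n) * ((X^n) i j) / (Nat.factorial (2*n) : ℝ)|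
      ≤ τ^(2*n) / (Nat.factorial (2*n) : ℝ) := by
    intro n
    have hfp : (0:ℝ) < (Nat.factorial (2*n) : ℝ) := by exact_mod_cast Nat.factorial_pos _
    rw [hτpow n, abs_div, abs_mul, abs_mul, abs_pow, abs_pow, abs_neg, abs_one, one_pow,
      one_mul, Nat.abs_cast]
    exact (div_le_div_iff_of_pos_right hfp).mpr
      (mul_le_mul_of_nonneg_left (abs_pow_entry_le X n i j) (by positivity))
  have hmaj : ∀ n : ℕ, τ^(2*n) / (Nat.factorial (2*n):ℝ) ≤ (τ^2)^n / (Nat.factorial n : ℝ) := by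
    intro n
    rw [← pow_mul]
    exact div_le_div_of_nonneg_left (by positivity)
      (by exact_mod_cast Nat.factorial_pos n) (by exact_mod_cast Nat.factorial_le (by omega))
  have hsumexp : Summable (fun n : ℕ => (τ^2)^n / (Nat.factorial n : ℝ)) := by
    simpa using Real.summable_pow_div_factorial (τ^2)
  -- Summability of the even series
  have hfsum : Summable (fun n : ℕ =>
      (-1:ℝ)^n * t^(2*n) * ((X^n) i j) / (Nat.factorial (2*n) : ℝ)) := by
    apply Summable.of_norm_bounded hsumexp
    intro n
    rw [Real.norm_eq_abs]
    exact le_trans (habs1 n) (hmaj n)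
  -- bound for the even series
  have hpx : |Cpx X i j t| ≤ (r^2)^m / (Real.sqrt d * (1 - r^2)) := by
    apply tsum_tail_bound _ m _ _ hq0 hq1 hsd hfsum
    · intro n hn
      simp [hzero n hn]
    · intro n hn
      exact le_trans (habs1 n) (hkey n hn)
  -- numerator comparison with the rpow
  have hnum : (r^2)^m ≤ r ^ ((2:ℝ)*d) := by
    rcases eq_or_lt_of_le hr0 with h0 | hrpos
    · rw [← h0, Real.zero_rpow (ne_of_gt (by linarith : (0:ℝ) < 2*d)),
        show ((0:ℝ)^2)^m = 0 by
          rw [show ((0:ℝ)^2) = 0 by norm_num, zero_pow (Nat.one_le_iff_ne_zero.mp hm1)]]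
    · have h1 : ((r^2)^m : ℝ) = r ^ (((2*m : ℕ) : ℕ) : ℝ) := by
        rw [Real.rpow_natCast, ← pow_mul]
      rw [h1]
      apply Real.rpow_le_rpow_of_exponent_ge hrpos hr1.le
      push_cast
      linarith
  have hBeq : B = r ^ ((2:ℝ)*d) / (Real.sqrt d * (1 - r^2)) := rfl
  have hBle : (r^2)^m / (Real.sqrt d * (1 - r^2)) ≤ B := by
    rw [hBeq]
    exact (div_le_div_iff_of_pos_right (mul_pos hsd (by linarith))).mpr hnum
  -- the two even bounds
  have hCpx : |Cpx X i j t| ≤ B := le_trans hpx hBle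
  have hCxp : |Cxp X i j t| ≤ B := by
    have : |Cxp X i j t| = |Cpx X i j t| := by
      rw [Cxp, Cpx, abs_neg]
    rw [this]; exact hCpx
  -- odd series
  have hτpow2 : ∀ n : ℕ, τ ^ (2*n+1)
      = Real.sqrt (l2OpNorm X) * (|t|^(2*n+1) * (l2OpNorm X)^n) := by
    intro n
    rw [pow_succ, hτpow n, show τ = Real.sqrt (l2OpNorm X) * |t| from rfl, pow_succ]
    ring
  have habs2 : ∀ n : ℕ, |Real.sqrt (l2OpNorm X) *
      ((-1:ℝ)^n * t^(2*n+1) * ((X^n) i j) / (Nat.factorial (2*n+1) : ℝ))|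
      ≤ τ^(2*n+1) / (Nat.factorial (2*n+1) : ℝ) := by
    intro n
    have hfp1 : (0:ℝ) < (Nat.factorial (2*n+1) : ℝ) := by exact_mod_cast Nat.factorial_pos _
    calc |Real.sqrt (l2OpNorm X) *
        ((-1:ℝ)^n * t^(2*n+1) * ((X^n) i j) / (Nat.factorial (2*n+1) : ℝ))|
        = Real.sqrt (l2OpNorm X) * |t|^(2*n+1) * |(X^n) i j| / (Nat.factorial (2*n+1) : ℝ) := by
          rw [abs_mul, abs_div, abs_mul, abs_mul, abs_pow, abs_pow, abs_neg, abs_one, one_pow,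
            one_mul, Nat.abs_cast, abs_of_nonneg hs0]
          ring
      _ ≤ Real.sqrt (l2OpNorm X) * |t|^(2*n+1) * (l2OpNorm X)^n
            / (Nat.factorial (2*n+1) : ℝ) := by
          apply (div_le_div_iff_of_pos_right hfp1).mpr
          exact mul_le_mul_of_nonneg_left (abs_pow_entry_le X n i j) (by positivity)
      _ = τ^(2*n+1) / (Nat.factorial (2*n+1) : ℝ) := by rw [hτpow2 n]; ring
  have hstep : ∀ n : ℕ, m ≤ n → τ^(2*n+1) / (Nat.factorial (2*n+1):ℝ)
      ≤ τ^(2*n) / (Nat.factorial (2*n):ℝ) := by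
    intro n hn
    have hdn : d ≤ (n:ℝ) := le_trans hdm (by exact_mod_cast hn)
    have hτle : τ ≤ 2*(n:ℝ)+1 := by
      have h1 : τ ≤ Real.exp 1 * τ := le_mul_of_one_le_left hτ0 he1
      linarith
    have hfp : (0:ℝ) < (Nat.factorial (2*n) : ℝ) := by exact_mod_cast Nat.factorial_pos _
    have heq : τ^(2*n+1) / (Nat.factorial (2*n+1):ℝ)
        = (τ^(2*n) / (Nat.factorial (2*n):ℝ)) * (τ / (2*(n:ℝ)+1)) := by
      rw [pow_succ, Nat.factorial_succ, div_mul_div_comm]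
      push_cast
      ring
    rw [heq]
    nth_rewrite 2 [← mul_one (τ^(2*n) / (Nat.factorial (2*n):ℝ))]
    apply mul_le_mul_of_nonneg_left _ (by positivity)
    rw [div_le_one (by positivity)]
    exact hτle
  have hmaj2 : ∀ n : ℕ, τ^(2*n+1) / (Nat.factorial (2*n+1):ℝ)
      ≤ τ * ((τ^2)^n / (Nat.factorial n : ℝ)) := by
    intro n
    have e1 : τ^(2*n+1) = τ * (τ^2)^n := by rw [pow_succ, ← pow_mul]; ring
    rw [e1, mul_div_assoc]
    apply mul_le_mul_of_nonneg_left _ hτ0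
    exact div_le_div_of_nonneg_left (by positivity)
      (by exact_mod_cast Nat.factorial_pos n) (by exact_mod_cast Nat.factorial_le (by omega))
  have hgsum : Summable (fun n : ℕ => Real.sqrt (l2OpNorm X) *
      ((-1:ℝ)^n * t^(2*n+1) * ((X^n) i j) / (Nat.factorial (2*n+1) : ℝ))) := by
    apply Summable.of_norm_bounded (hsumexp.mul_left τ)
    intro n
    rw [Real.norm_eq_abs]
    exact le_trans (habs2 n) (hmaj2 n)
  have hxx : |∑' n : ℕ, Real.sqrt (l2OpNorm X) *
      ((-1:ℝ)^n * t^(2*n+1) * ((X^n) i j) / (Nat.factorial (2*n+1) : ℝ))|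
      ≤ (r^2)^m / (Real.sqrt d * (1 - r^2)) := by
    apply tsum_tail_bound _ m _ _ hq0 hq1 hsd hgsum
    · intro n hn
      simp [hzero n hn]
    · intro n hn
      exact le_trans (habs2 n) (le_trans (hstep n hn) (hkey n hn))
  have hCxx : Real.sqrt (l2OpNorm X) * |Cxx X i j t| ≤ B := by
    have h1 : Real.sqrt (l2OpNorm X) * |Cxx X i j t|
        = |∑' n : ℕ, Real.sqrt (l2OpNorm X) *
          ((-1:ℝ)^n * t^(2*n+1) * ((X^n) i j) / (Nat.factorial (2*n+1) : ℝ))| := by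
      rw [tsum_mul_left, abs_mul, abs_of_nonneg hs0, Cxx]
    rw [h1]
    exact le_trans hxx hBle
  exact ⟨hCxx, hCxp, hCpx⟩
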